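/- Let Λ be a topological space and X a metric space. Let ℱ be an equicontinuous family of maps from Λ to X, let O ⊆ Λ be an open subset, and let ν : Λ → X be a continuous map such that for every λ ∈ O there exists f ∈ ℱ with ν(λ) = f(λ). Then for every λ* in the boundary of O, the point ν(λ*) lies in the closure of the set ℱ(λ*) = {f(λ*) : f ∈ ℱ}. -/

import Mathlib

open Set Filter Topology

/-- A family `ℱ` of maps from a topological space `Λ` to a metric space `X` is equicontinuous:
for every `λ ∈ Λ` and `ε > 0` there is a neighborhood `V` of `λ` on which all maps of `ℱ`
stay `ε`-close to their value at `λ`. -/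
def EquicontFamily {Λ X : Type*} [TopologicalSpace Λ] [MetricSpace X]
    (ℱ : Set (Λ → X)) : Prop :=
  ∀ lam : Λ, ∀ ε > 0, ∃ V ∈ 𝓝 lam, ∀ lam' ∈ V, ∀ f ∈ ℱ, dist (f lam') (f lam) < ε

/-- Let `ℱ` be an equicontinuous family of maps `Λ → X`, `O ⊆ Λ` open, and
`ν : Λ → X` continuous with `ν lam ∈ ℱ(lam)` for all `lam ∈ O`.  Then for every `lam*` in
the boundary of `O`, the point `ν lam*` lies in the closure of `ℱ(lam*) = {f lam* : f ∈ ℱ}`. -/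
theorem equicontinuous_boundary_value {Λ X : Type*} [TopologicalSpace Λ] [MetricSpace X]
    (ℱ : Set (Λ → X)) (hℱ : EquicontFamily ℱ) (O : Set Λ) (hO : IsOpen O)
    (ν : Λ → X) (hν : Continuous ν) (h : ∀ lam ∈ O, ∃ f ∈ ℱ, ν lam = f lam) :
    ∀ lam' ∈ frontier O, ν lam' ∈ closure {x : X | ∃ f ∈ ℱ, x = f lam'} := by
  intro lam' hlam'
  rw [Metric.mem_closure_iff]
  intro ε hε
  obtain ⟨V, hV, hVeq⟩ := hℱ lam' (ε / 2) (by linarith)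
  have hW : {l | dist (ν l) (ν lam') < ε / 2} ∈ 𝓝 lam' := by
    have := (hν.tendsto lam') (Metric.ball_mem_nhds (ν lam') (by linarith : (0:ℝ) < ε/2))
    exact this
  have hcl : lam' ∈ closure O := hlam'.1
  have hne : (V ∩ {l | dist (ν l) (ν lam') < ε / 2} ∩ O).Nonempty := by
    have := mem_closure_iff_nhds.mp hcl _ (inter_mem hV hW)
    simpa [inter_comm, Set.inter_assoc] using this
  obtain ⟨lam, ⟨hlV, hlW⟩, hlO⟩ := hne
  obtain ⟨f, hf, hfeq⟩ := h lam hlO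
  refine ⟨f lam', ⟨f, hf, rfl⟩, ?_⟩
  have h1 : dist (f lam) (f lam') < ε / 2 := hVeq lam hlV f hf
  calc dist (ν lam') (f lam') ≤ dist (ν lam') (ν lam) + dist (ν lam) (f lam') := dist_triangle _ _ _
    _ = dist (ν lam) (ν lam') + dist (f lam) (f lam') := by rw [dist_comm, hfeq]
    _ < ε / 2 + ε / 2 := by exact add_lt_add hlW h1
    _ = ε := by ring
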